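/- Let (a_ℓ)_{ℓ≥1} be a sequence of positive integers with continued fraction value α = [0; a_1, a_2, …] and convergents p_ℓ/q_ℓ. Let w, m, N be integers with 1 ≤ w ≤ m ≤ N, and define the quadratic polynomial P(X) := (q_{w−1} q_m − q_w q_{m−1}) X² − (q_{w−1} p_m − q_w p_{m−1} + p_{w−1} q_m − p_w q_{m−1}) X + (p_{w−1} p_m − p_w p_{m−1}). If β ∈ (0,1) is a real root of P with |α − β| ≤ 2/q_N², then |P(α)| ≤ 16 · q_m / (q_w · q_N²). -/

import Mathlib

open Filter Topology

/-- Denominators of the convergents of the continued fraction `[0; a 1, a 2, ...]`: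
`q_0 = 1`, `q_1 = a_1`, `q_{ℓ+2} = a_{ℓ+2} q_{ℓ+1} + q_ℓ`
(this encodes `q_{-1} = 0, q_0 = 1, q_ℓ = a_ℓ q_{ℓ-1} + q_{ℓ-2}`). -/
def cfQ (a : ℕ → ℕ) : ℕ → ℕ
  | 0 => 1
  | 1 => a 1
  | (n + 2) => a (n + 2) * cfQ a (n + 1) + cfQ a n

/-- Numerators of the convergents: `p_0 = 0`, `p_1 = 1`,
`p_{ℓ+2} = a_{ℓ+2} p_{ℓ+1} + p_ℓ` (encoding `p_{-1} = 1, p_0 = 0`). -/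
def cfP (a : ℕ → ℕ) : ℕ → ℕ
  | 0 => 0
  | 1 => 1
  | (n + 2) => a (n + 2) * cfP a (n + 1) + cfP a n

variable (a : ℕ → ℕ)

lemma cfQ_pos (hpos : ∀ ℓ, 1 ≤ ℓ → 0 < a ℓ) : ∀ n, 0 < cfQ a n
  | 0 => Nat.one_pos
  | 1 => hpos 1 le_rfl
  | (n+2) => Nat.add_pos_right _ (cfQ_pos hpos n)

lemma cfQ_le_succ (hpos : ∀ ℓ, 1 ≤ ℓ → 0 < a ℓ) : ∀ n, cfQ a n ≤ cfQ a (n+1)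
  | 0 => hpos 1 le_rfl
  | (n+1) => by
      show cfQ a (n+1) ≤ a (n+2) * cfQ a (n+1) + cfQ a n
      have h := hpos (n+2) (by omega)
      calc cfQ a (n+1) ≤ a (n+2) * cfQ a (n+1) := Nat.le_mul_of_pos_left _ h
        _ ≤ _ := Nat.le_add_right _ _

lemma cfQ_mono (hpos : ∀ ℓ, 1 ≤ ℓ → 0 < a ℓ) : Monotone (cfQ a) :=
  monotone_nat_of_le_succ (cfQ_le_succ a hpos)

lemma cfP_le_cfQ (hpos : ∀ ℓ, 1 ≤ ℓ → 0 < a ℓ) : ∀ n, cfP a n ≤ cfQ a n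
  | 0 => Nat.zero_le _
  | 1 => hpos 1 le_rfl
  | (n+2) => Nat.add_le_add
      (Nat.mul_le_mul_left _ (cfP_le_cfQ hpos (n+1))) (cfP_le_cfQ hpos n)

lemma cf_det : ∀ n, (cfP a (n+1) : ℤ) * cfQ a n - cfP a n * cfQ a (n+1) = (-1)^n
  | 0 => by simp [cfP, cfQ]
  | (n+1) => by
      have ih := cf_det n
      show ((a (n+2) * cfP a (n+1) + cfP a n : ℕ) : ℤ) * cfQ a (n+1)
          - (cfP a (n+1) : ℤ) * ((a (n+2) * cfQ a (n+1) + cfQ a n : ℕ)) = (-1)^(n+1)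
      push_cast
      linear_combination (-1 : ℤ) * ih

noncomputable def cfX (a : ℕ → ℕ) (n : ℕ) : ℝ := (cfP a n : ℝ) / (cfQ a n : ℝ)

lemma cfQR_pos (hpos : ∀ ℓ, 1 ≤ ℓ → 0 < a ℓ) (n : ℕ) : (0:ℝ) < cfQ a n := by
  exact_mod_cast cfQ_pos a hpos n

lemma cf_x_diff (hpos : ∀ ℓ, 1 ≤ ℓ → 0 < a ℓ) (n : ℕ) :
    cfX a (n+1) - cfX a n = (-1:ℝ)^n / (cfQ a n * cfQ a (n+1)) := by
  have h0 := cfQR_pos a hpos n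
  have h1 := cfQR_pos a hpos (n+1)
  have hd := cf_det a n
  have hd' : (cfP a (n+1) : ℝ) * cfQ a n - cfP a n * cfQ a (n+1) = (-1)^n := by
    exact_mod_cast congrArg (fun z : ℤ => (z : ℝ)) hd
  unfold cfX
  field_simp
  linear_combination hd'

lemma cf_key (hpos : ∀ ℓ, 1 ≤ ℓ → 0 < a ℓ) : ∀ n ℓ,
    0 ≤ (-1:ℝ)^ℓ * (cfX a (ℓ+n) - cfX a ℓ) ∧
    (-1:ℝ)^ℓ * (cfX a (ℓ+n) - cfX a ℓ) ≤ 1 / (cfQ a ℓ * cfQ a (ℓ+1)) := by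
  intro n
  induction n with
  | zero =>
    intro ℓ
    have h0 := cfQR_pos a hpos ℓ
    have h1 := cfQR_pos a hpos (ℓ+1)
    constructor <;> simp <;> positivity
  | succ n ih =>
    intro ℓ
    obtain ⟨ih1, ih2⟩ := ih (ℓ+1)
    have hdiff := cf_x_diff a hpos ℓ
    have h0 := cfQR_pos a hpos ℓ
    have h1 := cfQR_pos a hpos (ℓ+1)
    have h2 := cfQR_pos a hpos (ℓ+2)
    have hmono : (cfQ a ℓ : ℝ) ≤ cfQ a (ℓ+2) := by
      exact_mod_cast cfQ_mono a hpos (by omega : ℓ ≤ ℓ+2)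
    have hdle : (1:ℝ) / (cfQ a (ℓ+1) * cfQ a (ℓ+2)) ≤ 1 / (cfQ a ℓ * cfQ a (ℓ+1)) := by
      apply one_div_le_one_div_of_le (by positivity)
      calc (cfQ a ℓ : ℝ) * cfQ a (ℓ+1) ≤ cfQ a (ℓ+2) * cfQ a (ℓ+1) := by
            apply mul_le_mul_of_nonneg_right hmono (le_of_lt h1)
        _ = cfQ a (ℓ+1) * cfQ a (ℓ+2) := by ring
    have hsplit : (-1:ℝ)^ℓ * (cfX a (ℓ+(n+1)) - cfX a ℓ)
        = 1 / (cfQ a ℓ * cfQ a (ℓ+1)) - (-1:ℝ)^(ℓ+1) * (cfX a ((ℓ+1)+n) - cfX a (ℓ+1)) := by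
      have hidx : ℓ + (n+1) = (ℓ+1) + n := by omega
      rw [hidx]
      have hp : (-1:ℝ)^(ℓ+1) = -(-1:ℝ)^ℓ := by ring
      rw [hp]
      have hsp : cfX a ((ℓ+1)+n) - cfX a ℓ
          = (cfX a ((ℓ+1)+n) - cfX a (ℓ+1)) + (cfX a (ℓ+1) - cfX a ℓ) := by ring
      rw [hsp, hdiff]
      rcases Nat.even_or_odd ℓ with he | ho
      · rw [he.neg_one_pow]; ring
      · rw [ho.neg_one_pow]; ring
    constructor
    · rw [hsplit]; linarith
    · rw [hsplit]; linarith

lemma cf_abs_sub (hpos : ∀ ℓ, 1 ≤ ℓ → 0 < a ℓ) (α : ℝ)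
    (hα : Tendsto (fun ℓ => (cfP a ℓ : ℝ) / (cfQ a ℓ : ℝ)) atTop (𝓝 α)) (ℓ : ℕ) :
    |α - cfX a ℓ| ≤ 1 / (cfQ a ℓ * cfQ a (ℓ+1)) := by
  have hα' : Tendsto (fun k => (-1:ℝ)^ℓ * (cfX a k - cfX a ℓ)) atTop
      (𝓝 ((-1:ℝ)^ℓ * (α - cfX a ℓ))) := by
    exact ((hα.sub_const (cfX a ℓ)).const_mul _)
  have hev0 : ∀ᶠ k in atTop, 0 ≤ (-1:ℝ)^ℓ * (cfX a k - cfX a ℓ) := by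
    filter_upwards [eventually_ge_atTop ℓ] with k hk
    have := (cf_key a hpos (k - ℓ) ℓ).1
    rwa [Nat.add_sub_cancel' hk] at this
  have hev1 : ∀ᶠ k in atTop, (-1:ℝ)^ℓ * (cfX a k - cfX a ℓ) ≤ 1 / (cfQ a ℓ * cfQ a (ℓ+1)) := by
    filter_upwards [eventually_ge_atTop ℓ] with k hk
    have := (cf_key a hpos (k - ℓ) ℓ).2
    rwa [Nat.add_sub_cancel' hk] at this
  have hl : 0 ≤ (-1:ℝ)^ℓ * (α - cfX a ℓ) := ge_of_tendsto hα' hev0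
  have hu : (-1:ℝ)^ℓ * (α - cfX a ℓ) ≤ 1 / (cfQ a ℓ * cfQ a (ℓ+1)) := le_of_tendsto hα' hev1
  rcases Nat.even_or_odd ℓ with he | ho
  · rw [he.neg_one_pow, one_mul] at hl hu
    rw [abs_of_nonneg hl]; exact hu
  · rw [ho.neg_one_pow] at hl hu
    rw [abs_of_nonpos (by linarith)]; linarith

lemma cf_alpha_mem (hpos : ∀ ℓ, 1 ≤ ℓ → 0 < a ℓ) (α : ℝ)
    (hα : Tendsto (fun ℓ => (cfP a ℓ : ℝ) / (cfQ a ℓ : ℝ)) atTop (𝓝 α)) :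
    0 ≤ α ∧ α ≤ 1 := by
  constructor
  · apply ge_of_tendsto hα
    filter_upwards with k
    have h0 := cfQR_pos a hpos k
    positivity
  · apply le_of_tendsto hα
    filter_upwards with k
    have h0 := cfQR_pos a hpos k
    rw [div_le_one h0]
    exact_mod_cast cfP_le_cfQ a hpos k


set_option maxHeartbeats 1000000 in
theorem quadratic_polynomial_estimate (a : ℕ → ℕ) (hpos : ∀ ℓ, 1 ≤ ℓ → 0 < a ℓ)
    (α : ℝ) (hα : Tendsto (fun ℓ => (cfP a ℓ : ℝ) / (cfQ a ℓ : ℝ)) atTop (𝓝 α))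
    (w m N : ℕ) (hw : 1 ≤ w) (hwm : w ≤ m) (hmN : m ≤ N)
    (P : ℝ → ℝ)
    (hP : ∀ X : ℝ, P X =
        ((cfQ a (w - 1) : ℝ) * (cfQ a m : ℝ) - (cfQ a w : ℝ) * (cfQ a (m - 1) : ℝ)) * X ^ 2
        - ((cfQ a (w - 1) : ℝ) * (cfP a m : ℝ) - (cfQ a w : ℝ) * (cfP a (m - 1) : ℝ)
            + (cfP a (w - 1) : ℝ) * (cfQ a m : ℝ) - (cfP a w : ℝ) * (cfQ a (m - 1) : ℝ)) * X
        + ((cfP a (w - 1) : ℝ) * (cfP a m : ℝ) - (cfP a w : ℝ) * (cfP a (m - 1) : ℝ)))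
    (β : ℝ) (hβ0 : 0 < β) (hβ1 : β < 1) (hroot : P β = 0)
    (hclose : |α - β| ≤ 2 / (cfQ a N : ℝ) ^ 2) :
    |P α| ≤ 16 * (cfQ a m : ℝ) / ((cfQ a w : ℝ) * (cfQ a N : ℝ) ^ 2) := by
  obtain ⟨w', rfl⟩ : ∃ w', w = w' + 1 := ⟨w - 1, by omega⟩
  obtain ⟨m', rfl⟩ : ∃ m', m = m' + 1 := ⟨m - 1, by omega⟩
  simp only [Nat.add_sub_cancel] at hP
  have hQpos : ∀ n, (0:ℝ) < cfQ a n := cfQR_pos a hpos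
  have hQmono : ∀ i j, i ≤ j → (cfQ a i : ℝ) ≤ cfQ a j := by
    intro i j hij; exact_mod_cast cfQ_mono a hpos hij
  -- bound |q_ℓ α - p_ℓ| ≤ 1 / q_{ℓ+1}
  have hfα : ∀ ℓ, |(cfQ a ℓ : ℝ) * α - cfP a ℓ| ≤ 1 / cfQ a (ℓ+1) := by
    intro ℓ
    have hx := cf_abs_sub a hpos α hα ℓ
    have h0 : (cfQ a ℓ : ℝ) ≠ 0 := (hQpos ℓ).ne'
    have hrw : (cfQ a ℓ : ℝ) * α - cfP a ℓ = cfQ a ℓ * (α - cfX a ℓ) := by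
      unfold cfX; field_simp
    rw [hrw, abs_mul, abs_of_pos (hQpos ℓ)]
    calc (cfQ a ℓ : ℝ) * |α - cfX a ℓ|
        ≤ cfQ a ℓ * (1 / (cfQ a ℓ * cfQ a (ℓ+1))) :=
          mul_le_mul_of_nonneg_left hx (le_of_lt (hQpos ℓ))
      _ = 1 / cfQ a (ℓ+1) := by
          rw [mul_one_div, div_eq_div_iff (mul_pos (hQpos ℓ) (hQpos (ℓ+1))).ne' (hQpos (ℓ+1)).ne']
          ring
  have hfβ : ∀ ℓ, |(cfQ a ℓ : ℝ) * β - cfP a ℓ|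
      ≤ 1 / cfQ a (ℓ+1) + 2 * cfQ a ℓ / (cfQ a N : ℝ)^2 := by
    intro ℓ
    have h1 := hfα ℓ
    have h2 : |(cfQ a ℓ : ℝ) * (α - β)| ≤ cfQ a ℓ * (2 / (cfQ a N : ℝ)^2) := by
      rw [abs_mul, abs_of_pos (hQpos ℓ)]
      exact mul_le_mul_of_nonneg_left hclose (le_of_lt (hQpos ℓ))
    calc |(cfQ a ℓ : ℝ) * β - cfP a ℓ|
        = |((cfQ a ℓ : ℝ) * α - cfP a ℓ) - (cfQ a ℓ : ℝ) * (α - β)| := by ring_nf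
      _ ≤ |(cfQ a ℓ : ℝ) * α - cfP a ℓ| + |(cfQ a ℓ : ℝ) * (α - β)| := abs_sub _ _
      _ ≤ 1 / cfQ a (ℓ+1) + cfQ a ℓ * (2 / (cfQ a N : ℝ)^2) := add_le_add h1 h2
      _ = 1 / cfQ a (ℓ+1) + 2 * cfQ a ℓ / (cfQ a N : ℝ)^2 := by ring
  set t1 : ℝ := ((cfQ a w' : ℝ) * α - cfP a w') * cfQ a (m'+1) with ht1
  set t2 : ℝ := (cfQ a w' : ℝ) * ((cfQ a (m'+1) : ℝ) * β - cfP a (m'+1)) with ht2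
  set t3 : ℝ := ((cfQ a (w'+1) : ℝ) * α - cfP a (w'+1)) * cfQ a m' with ht3
  set t4 : ℝ := (cfQ a (w'+1) : ℝ) * ((cfQ a m' : ℝ) * β - cfP a m') with ht4
  have hPE : P α = (α - β) * (t1 + t2 - t3 - t4) := by
    have h1 := hP α
    have h2 := hP β
    rw [ht1, ht2, ht3, ht4]
    linear_combination h1 + hroot - h2
  have hQwm : (cfQ a (w'+1) : ℝ) ≤ cfQ a (m'+1) := hQmono _ _ (by omega)
  have hd1 : (1:ℝ) ≤ (cfQ a (m'+1) : ℝ) / cfQ a (w'+1) :=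
    (one_le_div (hQpos (w'+1))).mpr hQwm
  -- bound each term
  have hE1 : |t1| ≤ (cfQ a (m'+1) : ℝ) / cfQ a (w'+1) := by
    rw [ht1, abs_mul, abs_of_pos (hQpos (m'+1))]
    calc |(cfQ a w' : ℝ) * α - cfP a w'| * cfQ a (m'+1)
        ≤ (1 / cfQ a (w'+1)) * cfQ a (m'+1) :=
          mul_le_mul_of_nonneg_right (hfα w') (le_of_lt (hQpos (m'+1)))
      _ = (cfQ a (m'+1) : ℝ) / cfQ a (w'+1) := by ring
  have hE2 : |t2| ≤ 3 := by
    rw [ht2, abs_mul, abs_of_pos (hQpos w')]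
    have hb := hfβ (m'+1)
    have step : (cfQ a w' : ℝ) * |(cfQ a (m'+1) : ℝ) * β - cfP a (m'+1)|
        ≤ cfQ a w' * (1 / cfQ a (m'+2) + 2 * cfQ a (m'+1) / (cfQ a N : ℝ)^2) :=
      mul_le_mul_of_nonneg_left hb (le_of_lt (hQpos w'))
    have hA : (cfQ a w' : ℝ) * (1 / cfQ a (m'+2)) ≤ 1 := by
      rw [mul_one_div, div_le_one (hQpos (m'+2))]
      exact hQmono _ _ (by omega)
    have hB : (cfQ a w' : ℝ) * (2 * cfQ a (m'+1) / (cfQ a N : ℝ)^2) ≤ 2 := by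
      have h1 : (cfQ a w' : ℝ) ≤ cfQ a N := hQmono _ _ (by omega)
      have h2 : (cfQ a (m'+1) : ℝ) ≤ cfQ a N := hQmono _ _ (by omega)
      have hN2 : (0:ℝ) < (cfQ a N : ℝ)^2 := pow_pos (hQpos N) 2
      rw [mul_div_assoc', div_le_iff₀ hN2]
      nlinarith [hQpos w', hQpos (m'+1), hQpos N]
    calc (cfQ a w' : ℝ) * |(cfQ a (m'+1) : ℝ) * β - cfP a (m'+1)|
        ≤ cfQ a w' * (1 / cfQ a (m'+2) + 2 * cfQ a (m'+1) / (cfQ a N : ℝ)^2) := step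
      _ = (cfQ a w' : ℝ) * (1 / cfQ a (m'+2)) + (cfQ a w' : ℝ) * (2 * cfQ a (m'+1) / (cfQ a N : ℝ)^2) := by ring
      _ ≤ 1 + 2 := add_le_add hA hB
      _ = 3 := by norm_num
  have hE3 : |t3| ≤ (cfQ a (m'+1) : ℝ) / cfQ a (w'+1) := by
    rw [ht3, abs_mul, abs_of_pos (hQpos m')]
    have hb : |(cfQ a (w'+1) : ℝ) * α - cfP a (w'+1)| ≤ 1 / cfQ a (w'+1) := by
      refine le_trans (hfα (w'+1)) ?_
      apply one_div_le_one_div_of_le (hQpos (w'+1))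
      exact hQmono _ _ (by omega)
    calc |(cfQ a (w'+1) : ℝ) * α - cfP a (w'+1)| * cfQ a m'
        ≤ (1 / cfQ a (w'+1)) * cfQ a (m'+1) := by
          apply mul_le_mul hb (hQmono _ _ (by omega)) (le_of_lt (hQpos m')) (by positivity)
      _ = (cfQ a (m'+1) : ℝ) / cfQ a (w'+1) := by ring
  have hE4 : |t4| ≤ 3 := by
    rw [ht4, abs_mul, abs_of_pos (hQpos (w'+1))]
    have hb := hfβ m'
    have step : (cfQ a (w'+1) : ℝ) * |(cfQ a m' : ℝ) * β - cfP a m'|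
        ≤ cfQ a (w'+1) * (1 / cfQ a (m'+1) + 2 * cfQ a m' / (cfQ a N : ℝ)^2) :=
      mul_le_mul_of_nonneg_left hb (le_of_lt (hQpos (w'+1)))
    have hA : (cfQ a (w'+1) : ℝ) * (1 / cfQ a (m'+1)) ≤ 1 := by
      rw [mul_one_div, div_le_one (hQpos (m'+1))]
      exact hQwm
    have hB : (cfQ a (w'+1) : ℝ) * (2 * cfQ a m' / (cfQ a N : ℝ)^2) ≤ 2 := by
      have h1 : (cfQ a (w'+1) : ℝ) ≤ cfQ a N := hQmono _ _ (by omega)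
      have h2 : (cfQ a m' : ℝ) ≤ cfQ a N := hQmono _ _ (by omega)
      have hN2 : (0:ℝ) < (cfQ a N : ℝ)^2 := pow_pos (hQpos N) 2
      rw [mul_div_assoc', div_le_iff₀ hN2]
      nlinarith [hQpos (w'+1), hQpos m', hQpos N]
    calc (cfQ a (w'+1) : ℝ) * |(cfQ a m' : ℝ) * β - cfP a m'|
        ≤ cfQ a (w'+1) * (1 / cfQ a (m'+1) + 2 * cfQ a m' / (cfQ a N : ℝ)^2) := step
      _ = (cfQ a (w'+1) : ℝ) * (1 / cfQ a (m'+1)) + (cfQ a (w'+1) : ℝ) * (2 * cfQ a m' / (cfQ a N : ℝ)^2) := by ring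
      _ ≤ 1 + 2 := add_le_add hA hB
      _ = 3 := by norm_num
  have hEbound : |t1 + t2 - t3 - t4| ≤ 8 * ((cfQ a (m'+1) : ℝ) / cfQ a (w'+1)) := by
    obtain ⟨a1, b1⟩ := abs_le.mp hE1
    obtain ⟨a2, b2⟩ := abs_le.mp hE2
    obtain ⟨a3, b3⟩ := abs_le.mp hE3
    obtain ⟨a4, b4⟩ := abs_le.mp hE4
    rw [abs_le]
    constructor <;> linarith
  rw [hPE, abs_mul]
  calc |α - β| * |t1 + t2 - t3 - t4|
      ≤ (2 / (cfQ a N : ℝ)^2) * (8 * ((cfQ a (m'+1) : ℝ) / cfQ a (w'+1))) :=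
        mul_le_mul hclose hEbound (abs_nonneg _) (by positivity)
    _ = 16 * (cfQ a (m'+1) : ℝ) / ((cfQ a (w'+1) : ℝ) * (cfQ a N : ℝ)^2) := by
        field_simp
        ring
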